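/- Let θ be a formula such that there exists a synchronous TEHS in which θ is satisfiable. Then θ is satisfiable in a synchronous pseudo-TEM. -/

import Mathlib

namespace CMATEL

/-- A coalition is a nonempty set of agents. -/
def Coalition (Agt : Type) : Type := {A : Set Agt // A.Nonempty}

/-- The singleton coalition `{a}`. -/
def single {Agt : Type} (a : Agt) : Coalition Agt := ⟨{a}, Set.singleton_nonempty a⟩

/-- Formulas of the language L. -/
inductive Formula (Agt AP : Type) : Type where
  | atom : AP → Formula Agt AP
  | neg  : Formula Agt AP → Formula Agt AP
  | and  : Formula Agt AP → Formula Agt AP → Formula Agt AP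
  | next : Formula Agt AP → Formula Agt AP
  | untl : Formula Agt AP → Formula Agt AP → Formula Agt AP
  | dk   : Coalition Agt → Formula Agt AP → Formula Agt AP
  | ck   : Coalition Agt → Formula Agt AP → Formula Agt AP

variable {Agt AP : Type}

def Formula.imp (φ ψ : Formula Agt AP) : Formula Agt AP :=
  Formula.neg (Formula.and φ (Formula.neg ψ))
def Formula.or (φ ψ : Formula Agt AP) : Formula Agt AP :=
  Formula.neg (Formula.and (Formula.neg φ) (Formula.neg ψ))
def Formula.iff (φ ψ : Formula Agt AP) : Formula Agt AP :=
  Formula.and (φ.imp ψ) (ψ.imp φ)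

/-- The set of subformulas of a formula. -/
def Formula.subf : Formula Agt AP → Set (Formula Agt AP)
  | .atom p   => {Formula.atom p}
  | .neg φ    => insert (Formula.neg φ) φ.subf
  | .and φ ψ  => insert (Formula.and φ ψ) (φ.subf ∪ ψ.subf)
  | .next φ   => insert (Formula.next φ) φ.subf
  | .untl φ ψ => insert (Formula.untl φ ψ) (φ.subf ∪ ψ.subf)
  | .dk A φ   => insert (Formula.dk A φ) φ.subf
  | .ck A φ   => insert (Formula.ck A φ) φ.subf

/-- A temporal-epistemic system (TES): a nonempty set of states, a nonempty set
of runs, and, for every coalition `A`, relations `R^D_A` and `R^C_A` on points,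
where `R^C_A` is the reflexive transitive closure of the union of `R^D_{A'}`
over coalitions `A' ⊆ A`. -/
structure TES (Agt : Type) where
  State : Type
  stateNE : Nonempty State
  runs : Set (ℕ → State)
  runsNE : runs.Nonempty
  RD : Coalition Agt → ↥runs × ℕ → ↥runs × ℕ → Prop
  RC : Coalition Agt → ↥runs × ℕ → ↥runs × ℕ → Prop
  hRC : ∀ A : Coalition Agt, RC A =
    Relation.ReflTransGen (fun x y => ∃ A' : Coalition Agt, A'.1 ⊆ A.1 ∧ RD A' x y)

abbrev TES.Point (G : TES Agt) : Type := ↥G.runs × ℕ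

/-- Synchrony: epistemically related points have the same time component. -/
def TES.Synchronous (G : TES Agt) : Prop :=
  ∀ (A : Coalition Agt) (x y : G.Point), G.RD A x y → x.2 = y.2

/-- A TEF: each `R^D_A` is an equivalence, and `R^D_A = ⋂_{a ∈ A} R^D_{{a}}`. -/
def IsTEF (G : TES Agt) : Prop :=
  (∀ A : Coalition Agt, Equivalence (G.RD A)) ∧
  (∀ (A : Coalition Agt) (x y : G.Point), G.RD A x y ↔ ∀ a ∈ A.1, G.RD (single a) x y)

/-- A pseudo-TEF: each `R^D_A` is an equivalence, and `R^D_A ⊆ R^D_B` for `B ⊆ A`. -/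
def IsPseudoTEF (G : TES Agt) : Prop :=
  (∀ A : Coalition Agt, Equivalence (G.RD A)) ∧
  (∀ (A B : Coalition Agt), B.1 ⊆ A.1 → ∀ x y : G.Point, G.RD A x y → G.RD B x y)

/-- Satisfaction at points `R × ℕ`, given the epistemic relations and a labeling. -/
def Sat {R : Type} (RD RC : Coalition Agt → R × ℕ → R × ℕ → Prop)
    (lab : R × ℕ → Set AP) : R × ℕ → Formula Agt AP → Prop
  | x, .atom p => p ∈ lab x
  | x, .neg φ => ¬ Sat RD RC lab x φ
  | x, .and φ ψ => Sat RD RC lab x φ ∧ Sat RD RC lab x ψ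
  | x, .next φ => Sat RD RC lab (x.1, x.2 + 1) φ
  | x, .untl φ ψ => ∃ i, x.2 ≤ i ∧ Sat RD RC lab (x.1, i) ψ ∧
      ∀ j, x.2 ≤ j → j < i → Sat RD RC lab (x.1, j) φ
  | x, .dk A φ => ∀ y, RD A x y → Sat RD RC lab y φ
  | x, .ck A φ => ∀ y, RC A x y → Sat RD RC lab y φ

/-- A temporal-epistemic model: a TEF together with a labeling of points. -/
structure TEM (Agt AP : Type) where
  G : TES Agt
  lab : G.Point → Set AP
  isTEF : IsTEF G

def TEM.sat (M : TEM Agt AP) : M.G.Point → Formula Agt AP → Prop :=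
  Sat M.G.RD M.G.RC M.lab

/-- A pseudo temporal-epistemic model: a pseudo-TEF together with a labeling. -/
structure PseudoTEM (Agt AP : Type) where
  G : TES Agt
  lab : G.Point → Set AP
  isPTEF : IsPseudoTEF G

def PseudoTEM.sat (M : PseudoTEM Agt AP) : M.G.Point → Formula Agt AP → Prop :=
  Sat M.G.RD M.G.RC M.lab

/-- `A`-reachability: the reflexive transitive closure of single-agent steps
`R^D_{{a}}`, `a ∈ A`. -/
def AReach (G : TES Agt) (A : Coalition Agt) : G.Point → G.Point → Prop :=
  Relation.ReflTransGen (fun x y => ∃ a ∈ A.1, G.RD (single a) x y)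

/-- Fully expanded sets of formulas. -/
def FullyExpanded (Δ : Set (Formula Agt AP)) : Prop :=
  (∀ φ : Formula Agt AP, Formula.neg (Formula.neg φ) ∈ Δ → φ ∈ Δ) ∧
  (∀ φ ψ : Formula Agt AP, Formula.and φ ψ ∈ Δ → φ ∈ Δ ∧ ψ ∈ Δ) ∧
  (∀ φ ψ : Formula Agt AP, Formula.neg (Formula.and φ ψ) ∈ Δ →
      Formula.neg φ ∈ Δ ∨ Formula.neg ψ ∈ Δ) ∧
  (∀ φ : Formula Agt AP, Formula.neg (Formula.next φ) ∈ Δ →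
      Formula.next (Formula.neg φ) ∈ Δ) ∧
  (∀ φ ψ : Formula Agt AP, Formula.untl φ ψ ∈ Δ →
      ψ ∈ Δ ∨ (φ ∈ Δ ∧ Formula.next (Formula.untl φ ψ) ∈ Δ)) ∧
  (∀ φ ψ : Formula Agt AP, Formula.neg (Formula.untl φ ψ) ∈ Δ →
      (Formula.neg ψ ∈ Δ ∧ Formula.neg φ ∈ Δ) ∨
      (Formula.neg ψ ∈ Δ ∧ Formula.neg (Formula.next (Formula.untl φ ψ)) ∈ Δ)) ∧
  (∀ (A A' : Coalition Agt) (φ : Formula Agt AP), Formula.dk A φ ∈ Δ →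
      A.1 ⊆ A'.1 → Formula.dk A' φ ∈ Δ) ∧
  (∀ (A : Coalition Agt) (φ : Formula Agt AP), Formula.dk A φ ∈ Δ → φ ∈ Δ) ∧
  (∀ (A : Coalition Agt) (φ : Formula Agt AP), Formula.ck A φ ∈ Δ →
      ∀ a ∈ A.1, Formula.dk (single a) (Formula.and φ (Formula.ck A φ)) ∈ Δ) ∧
  (∀ (A : Coalition Agt) (φ : Formula Agt AP), Formula.neg (Formula.ck A φ) ∈ Δ →
      ∃ a ∈ A.1, Formula.neg (Formula.dk (single a) (Formula.and φ (Formula.ck A φ))) ∈ Δ) ∧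
  (∀ ψ ∈ Δ, ∀ (A : Coalition Agt) (φ : Formula Agt AP),
      Formula.dk A φ ∈ ψ.subf → Formula.dk A φ ∈ Δ ∨ Formula.neg (Formula.dk A φ) ∈ Δ)

/-- Hintikka-structure conditions (H1)–(H7) for a labeling `H` on a TES. -/
def IsHintikka (G : TES Agt) (H : G.Point → Set (Formula Agt AP)) : Prop :=
  (∀ (x : G.Point) (φ : Formula Agt AP), Formula.neg φ ∈ H x → φ ∉ H x) ∧
  (∀ x : G.Point, FullyExpanded (H x)) ∧
  (∀ (r : ↥G.runs) (n : ℕ) (φ : Formula Agt AP),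
      Formula.next φ ∈ H (r, n) → φ ∈ H (r, n + 1)) ∧
  (∀ (r : ↥G.runs) (n : ℕ) (φ ψ : Formula Agt AP), Formula.untl φ ψ ∈ H (r, n) →
      ∃ i, n ≤ i ∧ ψ ∈ H (r, i) ∧ ∀ j, n ≤ j → j < i → φ ∈ H (r, j)) ∧
  (∀ (x : G.Point) (A : Coalition Agt) (φ : Formula Agt AP),
      Formula.neg (Formula.dk A φ) ∈ H x →
      ∃ y : G.Point, G.RD A x y ∧ Formula.neg φ ∈ H y) ∧
  (∀ (x y : G.Point) (A : Coalition Agt), G.RD A x y →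
      ∀ (A' : Coalition Agt), A'.1 ⊆ A.1 → ∀ φ : Formula Agt AP,
        (Formula.dk A' φ ∈ H x ↔ Formula.dk A' φ ∈ H y)) ∧
  (∀ (x : G.Point) (A : Coalition Agt) (φ : Formula Agt AP),
      Formula.neg (Formula.ck A φ) ∈ H x →
      ∃ y : G.Point, G.RC A x y ∧ Formula.neg φ ∈ H y)

/-- A temporal-epistemic Hintikka structure. -/
structure TEHS (Agt AP : Type) where
  G : TES Agt
  H : G.Point → Set (Formula Agt AP)
  isH : IsHintikka G H

def TEHS.Synchronous (Hs : TEHS Agt AP) : Prop := Hs.G.Synchronous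

/-- Derived relation `R'^D_A`: the reflexive, symmetric and transitive closure of
the union of `R^D_B` over coalitions `B ⊇ A`. -/
def derivedRD (G : TES Agt) (A : Coalition Agt) : G.Point → G.Point → Prop :=
  Relation.EqvGen (fun x y => ∃ B : Coalition Agt, A.1 ⊆ B.1 ∧ G.RD B x y)

/-- Derived relation `R'^C_A`: the transitive closure of the union of
`R'^D_{{a}}` over `a ∈ A`. -/
def derivedRC (G : TES Agt) (A : Coalition Agt) : G.Point → G.Point → Prop :=
  Relation.TransGen (fun x y => ∃ a ∈ A.1, derivedRD G (single a) x y)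

/-- Derived labeling `L(r,n) = H(r,n) ∩ AP`. -/
def derivedLab (Hs : TEHS Agt AP) : Hs.G.Point → Set AP :=
  fun x => {p | Formula.atom p ∈ Hs.H x}

/-- Patently inconsistent set: contains a formula together with its negation. -/
def PatentlyInconsistent (Δ : Set (Formula Agt AP)) : Prop :=
  ∃ φ : Formula Agt AP, φ ∈ Δ ∧ Formula.neg φ ∈ Δ

/-- Minimal fully expanded extension. -/
def MinimalFEE (Γ Δ : Set (Formula Agt AP)) : Prop :=
  FullyExpanded Δ ∧ Γ ⊆ Δ ∧
  ¬ ∃ Δ' : Set (Formula Agt AP), FullyExpanded Δ' ∧ Γ ⊆ Δ' ∧ Δ' ⊂ Δ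

/-- A maximal path from `x` to `y`: consecutive points are related by `R^D_{A_i}`
and by no `R^D_B` for a strictly larger coalition `B`. -/
def IsMaximalPath (G : TES Agt) (m : ℕ) (pts : ℕ → G.Point) (cs : ℕ → Coalition Agt)
    (x y : G.Point) : Prop :=
  pts 0 = x ∧ pts m = y ∧ ∀ i < m,
    G.RD (cs i) (pts i) (pts (i + 1)) ∧
    ∀ B : Coalition Agt, (cs i).1 ⊂ B.1 → ¬ G.RD B (pts i) (pts (i + 1))

/-- A maximal path equals its reduction iff no two consecutive points lie on the
same run and no two consecutive coalition labels coincide. -/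
def IsReducedPath (G : TES Agt) (m : ℕ) (pts : ℕ → G.Point) (cs : ℕ → Coalition Agt) : Prop :=
  (∀ i < m, (pts i).1 ≠ (pts (i + 1)).1) ∧ (∀ i, i + 1 < m → cs i ≠ cs (i + 1))

/-- Forest-likeness: between any two points there is at most one reduced maximal path. -/
def ForestLike (G : TES Agt) : Prop :=
  ∀ (x y : G.Point) (m₁ : ℕ) (pts₁ : ℕ → G.Point) (cs₁ : ℕ → Coalition Agt)
    (m₂ : ℕ) (pts₂ : ℕ → G.Point) (cs₂ : ℕ → Coalition Agt),
    IsMaximalPath G m₁ pts₁ cs₁ x y → IsReducedPath G m₁ pts₁ cs₁ →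
    IsMaximalPath G m₂ pts₂ cs₂ x y → IsReducedPath G m₂ pts₂ cs₂ →
    m₁ = m₂ ∧ (∀ i ≤ m₁, pts₁ i = pts₂ i) ∧ (∀ i < m₁, cs₁ i = cs₂ i)

/-- Finite conjunction of a nonempty list of formulas. -/
def bigAnd : Formula Agt AP → List (Formula Agt AP) → Formula Agt AP
  | φ, [] => φ
  | φ, ψ :: l => Formula.and φ (bigAnd ψ l)

/-- `D_{{a}}(φ ∧ C_A φ)`. -/
def dform (A : Coalition Agt) (φ : Formula Agt AP) (a : Agt) : Formula Agt AP :=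
  Formula.dk (single a) (Formula.and φ (Formula.ck A φ))

/-- The derived common-knowledge relation built from `derivedRD`. -/
def dRC (G : TES Agt) (A : Coalition Agt) : G.Point → G.Point → Prop :=
  Relation.ReflTransGen
    (fun x y => ∃ A' : Coalition Agt, A'.1 ⊆ A.1 ∧ derivedRD G A' x y)

/-- The pseudo-TES obtained from a TES by taking derived relations. -/
def pseudoTES (G : TES Agt) : TES Agt where
  State := G.State
  stateNE := G.stateNE
  runs := G.runs
  runsNE := G.runsNE
  RD := derivedRD G
  RC := dRC G
  hRC := fun _ => rfl

/-- `D_{A'}` formulas are invariant along `derivedRD A` when `A' ⊆ A`. -/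
lemma dk_invariant (Hs : TEHS Agt AP) (A A' : Coalition Agt) (hAA' : A'.1 ⊆ A.1)
    (χ : Formula Agt AP) {x y : Hs.G.Point} (hxy : derivedRD Hs.G A x y) :
    (Formula.dk A' χ ∈ Hs.H x ↔ Formula.dk A' χ ∈ Hs.H y) := by
  induction hxy with
  | rel a b hab =>
    obtain ⟨B, hAB, hB⟩ := hab
    exact Hs.isH.2.2.2.2.2.1 a b B hB A' (hAA'.trans hAB) χ
  | refl => exact Iff.rfl
  | symm a b _ ih => exact ih.symm
  | trans a b c _ _ ih1 ih2 => exact ih1.trans ih2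

/-- Truth lemma: membership in the Hintikka labeling implies satisfaction in the
derived pseudo-model. -/
lemma satOfH (Hs : TEHS Agt AP) (φ : Formula Agt AP) :
    (∀ x, φ ∈ Hs.H x → Sat (derivedRD Hs.G) (dRC Hs.G) (derivedLab Hs) x φ) ∧
    (∀ x, Formula.neg φ ∈ Hs.H x →
      ¬ Sat (derivedRD Hs.G) (dRC Hs.G) (derivedLab Hs) x φ) := by
  obtain ⟨h1, h2, h3, h4, h5, h6, h7⟩ := Hs.isH
  induction φ with
  | atom p =>
    exact ⟨fun x hx => hx, fun x hx hs => h1 x _ hx hs⟩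
  | neg χ ih =>
    exact ⟨fun x hx => ih.2 x hx, fun x hx hs => hs (ih.1 x ((h2 x).1 χ hx))⟩
  | and χ ψ ihχ ihψ =>
    constructor
    · intro x hx
      obtain ⟨ha, hb⟩ := (h2 x).2.1 χ ψ hx
      exact ⟨ihχ.1 x ha, ihψ.1 x hb⟩
    · intro x hx hs
      rcases (h2 x).2.2.1 χ ψ hx with hn | hn
      · exact ihχ.2 x hn hs.1
      · exact ihψ.2 x hn hs.2
  | next χ ih =>
    constructor
    · intro x hx
      exact ih.1 (x.1, x.2 + 1) (h3 x.1 x.2 χ hx)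
    · intro x hx
      have := (h2 x).2.2.2.1 χ hx
      exact ih.2 (x.1, x.2 + 1) (h3 x.1 x.2 _ this)
  | untl χ ψ ihχ ihψ =>
    constructor
    · intro x hx
      obtain ⟨i, hni, hψ, hφ⟩ := h4 x.1 x.2 χ ψ hx
      exact ⟨i, hni, ihψ.1 _ hψ, fun j hj hji => ihχ.1 _ (hφ j hj hji)⟩
    · intro x hx hs
      obtain ⟨i, hni, hsψ, hsφ⟩ := hs
      have aux : ∀ m n, n + m = i → x.2 ≤ n →
          Formula.neg (Formula.untl χ ψ) ∈ Hs.H (x.1, n) → False := by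
        intro m
        induction m with
        | zero =>
          intro n hn hxn hmem
          have hni' : n = i := by omega
          subst hni'
          have hnegψ : Formula.neg ψ ∈ Hs.H (x.1, n) := by
            rcases (h2 (x.1, n)).2.2.2.2.2.1 χ ψ hmem with ⟨h, _⟩ | ⟨h, _⟩ <;> exact h
          exact ihψ.2 (x.1, n) hnegψ hsψ
        | succ m ih =>
          intro n hn hxn hmem
          rcases (h2 (x.1, n)).2.2.2.2.2.1 χ ψ hmem with ⟨_, hχ⟩ | ⟨_, hX⟩
          · exact ihχ.2 (x.1, n) hχ (hsφ n hxn (by omega))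
          · have hX' := (h2 (x.1, n)).2.2.2.1 _ hX
            exact ih (n + 1) (by omega) (by omega) (h3 x.1 n _ hX')
      exact aux (i - x.2) x.2 (by omega) le_rfl hx
  | dk A χ ih =>
    constructor
    · intro x hx y hxy
      have hdky := (dk_invariant Hs A A subset_rfl χ hxy).mp hx
      exact ih.1 y ((h2 y).2.2.2.2.2.2.2.1 A χ hdky)
    · intro x hx hs
      obtain ⟨y, hRD, hny⟩ := h5 x A χ hx
      exact ih.2 y hny (hs y (Relation.EqvGen.rel _ _ ⟨A, subset_rfl, hRD⟩))
  | ck A χ ih =>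
    constructor
    · intro x hx y hxy
      have inv : Formula.ck A χ ∈ Hs.H y := by
        induction hxy with
        | refl => exact hx
        | tail hbc hstep ihb =>
          obtain ⟨A', hA'A, hd⟩ := hstep
          obtain ⟨a, ha⟩ := A'.2
          have hdk := (h2 _).2.2.2.2.2.2.2.2.1 A χ ihb a (hA'A ha)
          have hdk' := (dk_invariant Hs A' (single a)
            (Set.singleton_subset_iff.mpr ha) _ hd).mp hdk
          have hand := (h2 _).2.2.2.2.2.2.2.1 _ _ hdk'
          exact ((h2 _).2.1 _ _ hand).2
      obtain ⟨a, ha⟩ := A.2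
      have hdk := (h2 y).2.2.2.2.2.2.2.2.1 A χ inv a ha
      have hand := (h2 y).2.2.2.2.2.2.2.1 _ _ hdk
      exact ih.1 y (((h2 y).2.1 _ _ hand).1)
    · intro x hx hs
      obtain ⟨y, hRC, hny⟩ := h7 x A χ hx
      rw [Hs.G.hRC A] at hRC
      have hRC' : dRC Hs.G A x y :=
        Relation.ReflTransGen.mono
          (fun a b hab => by
            obtain ⟨A', hA', hr⟩ := hab
            exact ⟨A', hA', Relation.EqvGen.rel _ _ ⟨A', subset_rfl, hr⟩⟩) _ _ hRC
      exact ih.2 y hny (hs y hRC')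

/-- If `θ` is satisfiable in some synchronous TEHS, then `θ` is
satisfiable in a synchronous pseudo-TEM. -/
theorem statement_5 {Agt AP : Type} [Fintype Agt] [Nonempty Agt]
    (θ : Formula Agt AP)
    (h : ∃ (Hs : TEHS Agt AP), Hs.G.Synchronous ∧ ∃ x : Hs.G.Point, θ ∈ Hs.H x) :
    ∃ (M : PseudoTEM Agt AP), M.G.Synchronous ∧ ∃ x : M.G.Point, M.sat x θ := by
  obtain ⟨Hs, hsync, x0, hx0⟩ := h
  refine ⟨⟨pseudoTES Hs.G, derivedLab Hs, ?_, ?_⟩, ?_, ⟨x0, ?_⟩⟩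
  · exact fun A => Relation.EqvGen.is_equivalence _
  · intro A B hBA x y hxy
    exact Relation.EqvGen.mono
      (fun a b hab => by
        obtain ⟨C, hC, hr⟩ := hab
        exact ⟨C, hBA.trans hC, hr⟩) _ _ hxy
  · intro A x y hxy
    induction hxy with
    | rel a b hab => obtain ⟨B, _, hB⟩ := hab; exact hsync B a b hB
    | refl => rfl
    | symm a b _ ih => exact ih.symm
    | trans a b c _ _ ih1 ih2 => exact ih1.trans ih2
  · exact (satOfH Hs θ).1 x0 hx0

end CMATEL
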